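/- Let g₂, g₃, B ∈ ℂ and let f(X) = 4X³ − g₂X − g₃ ∈ ℂ[X]. The polynomial D(X) = X − B/18 satisfies the ℓ=5 equation f·D'' + (3/2)f'·D' + (1/2)f''·D = (30X + B)·D in ℂ[X] if and only if B² = 27g₂. Equivalently, the values of B admitting the fourth-species Lamé polynomial solution Ψ = (x − B/18)·y of the ℓ=5 Lamé equation are exactly the roots of the Type-I spectral polynomial L₅^I(B) = B² − 27g₂. -/

import Mathlib

open Polynomial

theorem lame_l5_typeI_spectral (g₂ g₃ B : ℂ) :
    ((4 * X ^ 3 - C g₂ * X - C g₃) * derivative (derivative (X - C (B / 18)))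
        + C (3 / 2 : ℂ) * derivative (4 * X ^ 3 - C g₂ * X - C g₃)
          * derivative (X - C (B / 18))
        + C (1 / 2 : ℂ) * derivative (derivative (4 * X ^ 3 - C g₂ * X - C g₃))
          * (X - C (B / 18))
      = (30 * X + C B) * (X - C (B / 18))) ↔ B ^ 2 = 27 * g₂ := by
  constructor
  · intro h
    have h0 := congrArg (fun p => Polynomial.eval 0 p) h
    simp only [eval_add, eval_mul, eval_sub, eval_C, eval_X, eval_pow,
      derivative_sub, derivative_mul, derivative_C, derivative_X, derivative_X_pow,
      derivative_ofNat, eval_ofNat, eval_one, eval_zero, map_zero, derivative_one, derivative_add] at h0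
    field_simp at h0
    linear_combination (1/2 : ℂ) * h0
  · intro h
    apply Polynomial.funext
    intro x
    simp only [eval_add, eval_mul, eval_sub, eval_C, eval_X, eval_pow,
      derivative_sub, derivative_mul, derivative_C, derivative_X, derivative_X_pow,
      derivative_ofNat, eval_ofNat, eval_one, eval_zero, map_zero, derivative_one, derivative_add]
    field_simp
    linear_combination (2 : ℂ) * h
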